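/- Suppose η_n → 0, √n·η_n → ∞, and θ_n/η_n → ζ ∈ ℝ. Then the distribution of η_n^{-1}(θ̂_S − θ_n) under P_{n,θ_n} converges weakly to point mass at −sign(ζ)·min(1,|ζ|). -/

import Mathlib

open MeasureTheory ProbabilityTheory Real Filter Topology Set

noncomputable def stdGauss : Measure ℝ := gaussianReal 0 1

/-- Standard normal cdf. -/
noncomputable def Phi (x : ℝ) : ℝ := (stdGauss (Set.Iic x)).toReal

/-- Standard normal density. -/
noncomputable def phi (x : ℝ) : ℝ := gaussianPDFReal 0 1 x

/-- Hard-thresholding estimator. -/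
noncomputable def hardThresh (η y : ℝ) : ℝ := if η < |y| then y else 0

/-- Soft-thresholding (LASSO) estimator. -/
noncomputable def softThresh (η y : ℝ) : ℝ := Real.sign y * max (|y| - η) 0

/-- SCAD estimator. -/
noncomputable def scadThresh (a η y : ℝ) : ℝ :=
  if |y| ≤ 2 * η then Real.sign y * max (|y| - η) 0
  else if |y| ≤ a * η then ((a - 1) * y - Real.sign y * a * η) / (a - 2)
  else y


lemma sign_pos_mul (e a : ℝ) (he : 0 < e) : Real.sign (e * a) = Real.sign a := by
  rcases lt_trichotomy a 0 with h|h|h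
  · rw [Real.sign_of_neg h, Real.sign_of_neg (mul_neg_of_pos_of_neg he h)]
  · simp [h]
  · rw [Real.sign_of_pos h, Real.sign_of_pos (mul_pos he h)]

lemma G_eq (a : ℝ) : Real.sign a * max (|a| - 1) 0 = max (a - 1) 0 + min (a + 1) 0 := by
  rcases lt_trichotomy a 0 with h|h|h
  · rw [Real.sign_of_neg h, abs_of_neg h, max_eq_right (by linarith : a - 1 ≤ 0)]
    rcases le_total (a + 1) 0 with h1|h1
    · rw [max_eq_left (by linarith), min_eq_left h1]; ring
    · rw [max_eq_right (by linarith), min_eq_right h1]; ring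
  · simp [h]
  · rw [Real.sign_of_pos h, abs_of_pos h, min_eq_right (by linarith : (0:ℝ) ≤ a + 1)]
    ring


lemma limit_eq (a : ℝ) : max (a - 1) 0 + min (a + 1) 0 - a = -(Real.sign a * min 1 |a|) := by
  rcases lt_trichotomy a 0 with h|h|h
  · rw [Real.sign_of_neg h, abs_of_neg h, max_eq_right (by linarith : a - 1 ≤ 0)]
    rcases le_total (a + 1) 0 with h1|h1
    · rw [min_eq_left h1, min_eq_left (by linarith : (1:ℝ) ≤ -a)]; ring
    · rw [min_eq_right h1, min_eq_right (by linarith : -a ≤ 1)]; ring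
  · simp [h]
  · rw [Real.sign_of_pos h, abs_of_pos h, min_eq_right (by linarith : (0:ℝ) ≤ a + 1)]
    rcases le_total a 1 with h1|h1
    · rw [max_eq_right (by linarith), min_eq_right h1]; ring
    · rw [max_eq_left (by linarith), min_eq_left h1]; ring

lemma key (e t z : ℝ) (he : 0 < e) :
    e⁻¹ * (softThresh e (t + z) - t)
      = max ((t + z) / e - 1) 0 + min ((t + z) / e + 1) 0 - t / e := by
  set a := (t + z) / e with ha
  have hy : t + z = e * a := by rw [ha]; field_simp
  rw [← G_eq, hy]
  unfold softThresh
  rw [sign_pos_mul e a he, abs_mul, abs_of_pos he]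
  have hmax : max (e * |a| - e) 0 = e * max (|a| - 1) 0 := by
    rw [mul_max_of_nonneg _ _ he.le, mul_sub, mul_one, mul_zero]
  rw [hmax]
  field_simp


theorem stmt_18 (η θ : ℕ → ℝ) (hηpos : ∀ n, 0 < η n) (ζ : ℝ)
    (hη0 : Tendsto η atTop (𝓝 0))
    (hηe : Tendsto (fun n : ℕ => Real.sqrt n * η n) atTop atTop)
    (hθζ : Tendsto (fun n => θ n / η n) atTop (𝓝 ζ)) :
    ∀ f : BoundedContinuousFunction ℝ ℝ,
      Tendsto (fun n : ℕ => ∫ x, f x ∂(Measure.map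
            (fun z => (η n)⁻¹ * (softThresh (η n) (θ n + z / Real.sqrt n) - θ n)) stdGauss))
        atTop
        (𝓝 (∫ x, f x ∂(Measure.dirac (-(Real.sign ζ * min 1 |ζ|)) : Measure ℝ))) := by
  intro f
  rw [integral_dirac]
  set c : ℝ := -(Real.sign ζ * min 1 |ζ|) with hc
  -- rewrite each map
  have hfun : ∀ n : ℕ, (fun z => (η n)⁻¹ * (softThresh (η n) (θ n + z / Real.sqrt n) - θ n))
      = fun z => max ((θ n + z / Real.sqrt n) / η n - 1) 0
          + min ((θ n + z / Real.sqrt n) / η n + 1) 0 - θ n / η n :=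
    fun n => funext fun z => key (η n) (θ n) (z / Real.sqrt n) (hηpos n)
  have hcont : ∀ n : ℕ, Continuous (fun z : ℝ => max ((θ n + z / Real.sqrt n) / η n - 1) 0
          + min ((θ n + z / Real.sqrt n) / η n + 1) 0 - θ n / η n) := by
    intro n
    have h1 : Continuous fun z : ℝ => (θ n + z / Real.sqrt n) / η n :=
      ((continuous_const.add (continuous_id.div_const _)).div_const _)
    exact (((h1.sub continuous_const).max continuous_const).add
      ((h1.add continuous_const).min continuous_const)).sub continuous_const
  have hint : ∀ n : ℕ, ∫ x, f x ∂(Measure.map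
        (fun z => (η n)⁻¹ * (softThresh (η n) (θ n + z / Real.sqrt n) - θ n)) stdGauss)
      = ∫ z, f (max ((θ n + z / Real.sqrt n) / η n - 1) 0
          + min ((θ n + z / Real.sqrt n) / η n + 1) 0 - θ n / η n) ∂stdGauss := by
    intro n
    rw [hfun n]
    exact integral_map (hcont n).aemeasurable f.continuous.aestronglyMeasurable
  simp only [hint]
  have : IsProbabilityMeasure stdGauss := by
    unfold stdGauss; infer_instance
  have hfc : f c = ∫ _z, f c ∂stdGauss := by simp
  rw [hfc]
  apply tendsto_integral_of_dominated_convergence (fun _ => ‖f‖)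
  · exact fun n => (f.continuous.comp (hcont n)).aestronglyMeasurable
  · exact integrable_const _
  · exact fun n => Filter.Eventually.of_forall fun z => f.norm_coe_le_norm _
  · refine Filter.Eventually.of_forall fun z => ?_
    have ha : Tendsto (fun n : ℕ => (θ n + z / Real.sqrt n) / η n) atTop (𝓝 ζ) := by
      have heq : ∀ n : ℕ, (θ n + z / Real.sqrt n) / η n
          = θ n / η n + z / (Real.sqrt n * η n) := fun n => by
        rw [add_div, div_div]
      simp only [heq]
      have h0 : Tendsto (fun n : ℕ => z / (Real.sqrt n * η n)) atTop (𝓝 0) :=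
        Tendsto.div_atTop tendsto_const_nhds hηe
      simpa using hθζ.add h0
    have hlim : Tendsto (fun n : ℕ => max ((θ n + z / Real.sqrt n) / η n - 1) 0
          + min ((θ n + z / Real.sqrt n) / η n + 1) 0 - θ n / η n) atTop (𝓝 c) := by
      have h1 : Tendsto (fun n : ℕ => max ((θ n + z / Real.sqrt n) / η n - 1) 0
            + min ((θ n + z / Real.sqrt n) / η n + 1) 0 - θ n / η n) atTop
          (𝓝 (max (ζ - 1) 0 + min (ζ + 1) 0 - ζ)) :=
        (((ha.sub_const 1).max tendsto_const_nhds).add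
          ((ha.add_const 1).min tendsto_const_nhds)).sub hθζ
      rwa [limit_eq ζ] at h1
    exact (f.continuous.tendsto c).comp hlim
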